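/- With the notation of the quadratic surrogate theorem, for every pair p ∈ P the weight ξ_p = Σ_k ω_k² β_k û_{kp} is nonnegative, and consequently the matrix D(q̂) = Σ_{p ∈ P} ξ_p Δ_p Δ_pᵀ is symmetric positive semidefinite. -/

import Mathlib

open Matrix Real ComplexOrder

/-- The unnormalized sinc function: `sinc x = sin x / x` for `x ≠ 0` and `sinc 0 = 1`. -/
noncomputable def sinc (x : ℝ) : ℝ := if x = 0 then 1 else Real.sin x / x

/-- The steering vector `a(q) = M^{-1/2} (exp(i ω d_1ᵀ q), …, exp(i ω d_Mᵀ q))`. -/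
noncomputable def steer (M : ℕ) (d : Fin M → Fin 3 → ℝ) (ω : ℝ) (q : Fin 3 → ℝ) :
    Fin M → ℂ :=
  fun m => ((Real.sqrt M : ℝ) : ℂ)⁻¹ * Complex.exp (Complex.I * ((ω * (d m ⬝ᵥ q) : ℝ) : ℂ))

/-- The set of distinct pairs `{(m,r) : m < r}`. -/
def pairs (M : ℕ) : Finset (Fin M × Fin M) := Finset.univ.filter fun p => p.1 < p.2

lemma sinc_nonneg_of_abs_le_pi {t : ℝ} (ht : |t| ≤ π) : 0 ≤ _root_.sinc t := by
  unfold _root_.sinc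
  rcases eq_or_ne t 0 with h | h
  · simp [h]
  · rw [if_neg h]
    rcases lt_or_gt_of_ne h with hneg | hpos
    · apply div_nonneg_of_nonpos _ hneg.le
      have h1 : -π ≤ t := by
        have := abs_le.mp ht; linarith [this.1]
      have : 0 ≤ Real.sin (-t) := Real.sin_nonneg_of_nonneg_of_le_pi (by linarith) (by linarith)
      rw [Real.sin_neg] at this; linarith
    · apply div_nonneg _ hpos.le
      exact Real.sin_nonneg_of_nonneg_of_le_pi hpos.le (by have := abs_le.mp ht; linarith [this.2])

lemma quad_vecMulVec (v x : Fin 3 → ℝ) : x ⬝ᵥ (vecMulVec v v).mulVec x = (v ⬝ᵥ x) ^ 2 := by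
  simp only [dotProduct, Matrix.mulVec, dotProduct, vecMulVec_apply, sq]
  rw [Finset.sum_mul_sum]
  simp only [Finset.mul_sum]
  exact Finset.sum_congr rfl fun i _ => Finset.sum_congr rfl fun j _ => by ring

lemma quad_sum {ι : Type*} [DecidableEq ι] (s : Finset ι) (c : ι → ℝ) (v : ι → Fin 3 → ℝ) (x : Fin 3 → ℝ) :
    x ⬝ᵥ (∑ p ∈ s, c p • vecMulVec (v p) (v p)).mulVec x = ∑ p ∈ s, c p * (v p ⬝ᵥ x) ^ 2 := by
  induction s using Finset.induction with
  | empty => simp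
  | insert _ _ hp ih =>
    rw [Finset.sum_insert hp, Finset.sum_insert hp, Matrix.add_mulVec, dotProduct_add, ih,
      smul_mulVec, dotProduct_smul, quad_vecMulVec]
    rfl

/-- With the notation of the quadratic surrogate theorem, every weight `ξ_p` is nonnegative,
and consequently `D(q̂) = Σ_p ξ_p Δ_p Δ_pᵀ` is symmetric positive semidefinite. -/
theorem xi_nonneg_and_D_posSemidef (M K : ℕ) (hM : 2 ≤ M) (hK : 1 ≤ K)
    (d : Fin M → Fin 3 → ℝ)
    (ω : Fin K → ℝ) (hω : ∀ k, 0 < ω k)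
    (V : Fin K → Matrix (Fin M) (Fin M) ℂ) (hV : ∀ k, (V k).PosDef)
    (s : ℝ) (hs : s < 1) (hs0 : s ≠ 0)
    (qhat : Fin 3 → ℝ) (hqhat : Real.sqrt (∑ i, qhat i ^ 2) = 1)
    (z : Fin K → Fin M × Fin M → ℤ)
    (hz : ∀ k, ∀ p ∈ pairs M, ∀ z' : ℤ,
      |Complex.arg (V k p.1 p.2) + π - ω k * ((d p.1 - d p.2) ⬝ᵥ qhat) + 2 * π * (z k p : ℝ)| ≤
      |Complex.arg (V k p.1 p.2) + π - ω k * ((d p.1 - d p.2) ⬝ᵥ qhat) + 2 * π * (z' : ℝ)|)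
    (ψh uh : Fin K → Fin M × Fin M → ℝ)
    (hψh : ∀ k p, ψh k p = Complex.arg (V k p.1 p.2) + π + 2 * π * (z k p : ℝ))
    (huh : ∀ k p, uh k p = (‖V k p.1 p.2‖ / (M : ℝ)) *
      _root_.sinc (ψh k p - ω k * ((d p.1 - d p.2) ⬝ᵥ qhat)))
    (β : Fin K → ℝ)
    (hβ : ∀ k, β k =
      (1 / (K : ℝ)) *
        (star (steer M d (ω k) qhat) ⬝ᵥ (V k).mulVec (steer M d (ω k) qhat)).re ^ (s - 1) /
      ((1 / (K : ℝ)) *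
        ∑ k', (star (steer M d (ω k') qhat) ⬝ᵥ
          (V k').mulVec (steer M d (ω k') qhat)).re ^ s) ^ (1 - 1 / s))
    (ξ : Fin M × Fin M → ℝ)
    (hξ : ∀ p, ξ p = ∑ k, ω k ^ 2 * β k * uh k p)
    (D : Matrix (Fin 3) (Fin 3) ℝ)
    (hD : D = ∑ p ∈ pairs M, ξ p • vecMulVec (d p.1 - d p.2) (d p.1 - d p.2)) :
    (∀ p ∈ pairs M, 0 ≤ ξ p) ∧ D.PosSemidef := by
  -- steering vectors are nonzero
  have hM0 : (0 : ℝ) < (M : ℝ) := by positivity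
  have hsteer : ∀ k, steer M d (ω k) qhat ≠ 0 := by
    intro k h
    have h0 : steer M d (ω k) qhat ⟨0, by omega⟩ = 0 := by rw [h]; rfl
    have : ((Real.sqrt M : ℝ) : ℂ) ≠ 0 := by
      simp only [ne_eq, Complex.ofReal_eq_zero]
      exact ne_of_gt (Real.sqrt_pos.mpr hM0)
    simp only [steer, mul_eq_zero, inv_eq_zero, Complex.exp_ne_zero, or_false] at h0
    exact this h0
  -- the quadratic forms are positive
  have hA : ∀ k, 0 < (star (steer M d (ω k) qhat) ⬝ᵥ
      (V k).mulVec (steer M d (ω k) qhat)).re :=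
    fun k => (hV k).re_dotProduct_pos (hsteer k)
  -- β is positive
  have hβpos : ∀ k, 0 < β k := by
    intro k
    rw [hβ k]
    have hKpos : (0 : ℝ) < 1 / (K : ℝ) := by
      have : (0:ℝ) < (K:ℝ) := by exact_mod_cast hK
      positivity
    apply div_pos
    · exact mul_pos hKpos (Real.rpow_pos_of_pos (hA k) _)
    · apply Real.rpow_pos_of_pos
      apply mul_pos hKpos
      apply Finset.sum_pos
      · exact fun k' _ => Real.rpow_pos_of_pos (hA k') _
      · exact Finset.univ_nonempty_iff.mpr ⟨⟨0, by omega⟩⟩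
  -- uh is nonnegative on pairs
  have huhn : ∀ k, ∀ p ∈ pairs M, 0 ≤ uh k p := by
    intro k p hp
    rw [huh k p]
    apply mul_nonneg (by positivity)
    apply sinc_nonneg_of_abs_le_pi
    set c : ℝ := Complex.arg (V k p.1 p.2) + π - ω k * ((d p.1 - d p.2) ⬝ᵥ qhat) with hc
    have ht : ψh k p - ω k * ((d p.1 - d p.2) ⬝ᵥ qhat) = c + 2 * π * (z k p : ℝ) := by
      rw [hψh k p, hc]; ring
    rw [ht]
    have hmin := hz k p hp (-round (c / (2 * π)))
    refine hmin.trans ?_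
    have h2π : (0:ℝ) < 2 * π := by positivity
    have hr := abs_sub_round (c / (2 * π))
    have hcr : c + 2 * π * ((-round (c / (2 * π)) : ℤ) : ℝ) =
        (2 * π) * (c / (2 * π) - round (c / (2 * π))) := by
      push_cast
      field_simp
      ring
    rw [hcr, abs_mul, abs_of_pos h2π]
    calc 2 * π * |c / (2 * π) - ↑(round (c / (2 * π)))| ≤ 2 * π * (1 / 2) := by
          exact mul_le_mul_of_nonneg_left hr h2π.le
      _ = π := by ring
  -- ξ is nonnegative on pairs
  have hξn : ∀ p ∈ pairs M, 0 ≤ ξ p := by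
    intro p hp
    rw [hξ p]
    apply Finset.sum_nonneg
    intro k _
    exact mul_nonneg (mul_nonneg (by positivity) (hβpos k).le) (huhn k p hp)
  refine ⟨hξn, posSemidef_iff_dotProduct_mulVec.mpr ⟨?_, ?_⟩⟩
  · -- Hermitian
    subst hD
    ext i j
    simp only [Matrix.conjTranspose_apply, Matrix.sum_apply, Matrix.smul_apply,
      vecMulVec_apply, star_trivial, smul_eq_mul]
    exact Finset.sum_congr rfl fun p _ => by ring
  · -- quadratic form nonneg
    intro x
    subst hD
    rw [show star x = x from rfl, quad_sum]
    apply Finset.sum_nonneg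
    intro p hp
    exact mul_nonneg (hξn p hp) (sq_nonneg _)
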